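/- arXiv:2403.02963 — 3 statements merged into one kernel-verified Lean document; each statement's English description precedes it below -/
import Mathlib

section
/- Let μ ∈ ℝ, σ > 0, Γ̄ > 0, λ > 0, ρ > 0, and set Υ = 1/(2σ²) + Γ̄/(ρλ). Then ∫_0^∞ (1/λ) exp(−x/λ) · exp(−(√(ρx/Γ̄) − μ)²/(2σ²)) dx = (Γ̄/(ρλΥ)) · [ exp(−μ²/(2σ²)) + (μ√π/(σ²√Υ)) · exp(−μ²Γ̄/(2σ²ρλΥ)) · Q(−μ√2/(2σ²√Υ)) ], where Q is the Gaussian Q-function. -/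
open MeasureTheory Real

/-- The Gaussian Q-function. -/
noncomputable def gaussQ (x : ℝ) : ℝ :=
  (1 / Real.sqrt (2 * Real.pi)) * ∫ u in Set.Ioi x, Real.exp (-u ^ 2 / 2)

open Set Filter

lemma integral_Ioi_comp_add_right (g : ℝ → ℝ) (a c : ℝ) :
    ∫ x in Set.Ioi a, g (x + c) = ∫ x in Set.Ioi (a + c), g x := by
  have h := (measurePreserving_add_right (volume : Measure ℝ) c).setIntegral_preimage_emb
    (MeasurableEquiv.addRight c).measurableEmbedding g (Set.Ioi (a + c))
  simpa [MeasurableEquiv.addRight, preimage_add_const_Ioi] using h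

lemma tail_mul {b : ℝ} (hb : 0 < b) (a : ℝ) :
    ∫ t in Set.Ioi a, t * Real.exp (-b * t ^ 2) = Real.exp (-b * a ^ 2) / (2 * b) := by
  have hderiv : ∀ x ∈ Set.Ici a, HasDerivAt (fun t => -Real.exp (-b * t ^ 2) / (2 * b))
      (x * Real.exp (-b * x ^ 2)) x := by
    intro x _
    have h1 : HasDerivAt (fun t : ℝ => -b * t ^ 2) (-b * (2 * x)) x := by
      simpa using ((hasDerivAt_pow 2 x).const_mul (-b))
    have h2 : HasDerivAt (fun t => -Real.exp (-b * t ^ 2) / (2 * b))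
        (-(Real.exp (-b * x ^ 2) * (-b * (2 * x))) / (2 * b)) x := (h1.exp.neg).div_const (2 * b)
    convert h2 using 1
    field_simp
  have htend : Tendsto (fun t : ℝ => -Real.exp (-b * t ^ 2) / (2 * b)) atTop (nhds 0) := by
    have h3 : Tendsto (fun t : ℝ => -b * t ^ 2) atTop atBot := by
      have := (tendsto_pow_atTop (two_ne_zero)).const_mul_atTop hb
      simpa [neg_mul] using tendsto_neg_atBot_iff.mpr this
    have h4 := (Real.tendsto_exp_atBot.comp h3).neg.div_const (2 * b)
    simpa using h4
  have := integral_Ioi_of_hasDerivAt_of_tendsto' hderiv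
    ((integrable_mul_exp_neg_mul_sq hb).integrableOn) htend
  rw [this]
  field_simp
  ring

lemma tail_exp {b : ℝ} (hb : 0 < b) (a : ℝ) :
    ∫ t in Set.Ioi a, Real.exp (-b * t ^ 2)
      = Real.sqrt (Real.pi / b) * gaussQ (Real.sqrt (2 * b) * a) := by
  have hs : 0 < Real.sqrt (2 * b) := Real.sqrt_pos.mpr (by positivity)
  have hpt : ∀ t : ℝ, Real.exp (-b * t ^ 2)
      = (fun u => Real.exp (-u ^ 2 / 2)) (Real.sqrt (2 * b) * t) := by
    intro t
    simp only [mul_pow, Real.sq_sqrt (by positivity : (0:ℝ) ≤ 2 * b)]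
    ring_nf
  calc ∫ t in Set.Ioi a, Real.exp (-b * t ^ 2)
      = ∫ t in Set.Ioi a, (fun u => Real.exp (-u ^ 2 / 2)) (Real.sqrt (2 * b) * t) := by
        simp_rw [← hpt]
    _ = (Real.sqrt (2 * b))⁻¹ • ∫ u in Set.Ioi (Real.sqrt (2 * b) * a),
          Real.exp (-u ^ 2 / 2) :=
        integral_comp_mul_left_Ioi (fun u => Real.exp (-u ^ 2 / 2)) a hs
    _ = Real.sqrt (Real.pi / b) * gaussQ (Real.sqrt (2 * b) * a) := by
        rw [gaussQ, smul_eq_mul]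
        rw [show (Real.sqrt (2 * b))⁻¹ = Real.sqrt (Real.pi / b) * (1 / Real.sqrt (2 * Real.pi))
          from ?_]
        · ring
        · rw [one_div, ← Real.sqrt_inv (2 * Real.pi),
            ← Real.sqrt_mul (by positivity : (0:ℝ) ≤ Real.pi / b), ← Real.sqrt_inv (2 * b)]
          congr 1
          have hπ := Real.pi_pos
          field_simp

lemma subst_sq (g : ℝ → ℝ) {k : ℝ} (hk : 0 < k) :
    ∫ x in Set.Ioi (0 : ℝ), g x
      = ∫ t in Set.Ioi (0 : ℝ), (k * (2 * t)) * g (k * t ^ 2) := by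
  have a1 : ∀ t ∈ Set.Ioi (0 : ℝ),
      HasDerivWithinAt (fun t : ℝ => k * t ^ 2) (k * (2 * t)) (Set.Ioi 0) t := by
    intro t _
    have := ((hasDerivAt_pow 2 t).const_mul k).hasDerivWithinAt (s := Set.Ioi (0:ℝ))
    simpa using this
  have a2 : Set.InjOn (fun t : ℝ => k * t ^ 2) (Set.Ioi 0) := by
    intro x hx y hy hxy
    simp only [Set.mem_Ioi] at hx hy
    have : x ^ 2 = y ^ 2 := mul_left_cancel₀ hk.ne' hxy
    nlinarith
  have a3 : (fun t : ℝ => k * t ^ 2) '' Set.Ioi 0 = Set.Ioi 0 := by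
    ext x
    constructor
    · rintro ⟨y, hy, rfl⟩
      simp only [Set.mem_Ioi] at hy ⊢
      positivity
    · intro hx
      simp only [Set.mem_Ioi] at hx
      refine ⟨Real.sqrt (x / k), Real.sqrt_pos.mpr (by positivity), ?_⟩
      simp only
      rw [Real.sq_sqrt (by positivity)]
      field_simp
  have h := integral_image_eq_integral_abs_deriv_smul measurableSet_Ioi a1 a2 g
  rw [a3] at h
  rw [h]
  refine setIntegral_congr_fun measurableSet_Ioi fun t ht => ?_
  simp only [Set.mem_Ioi] at ht
  rw [smul_eq_mul, abs_of_pos (by positivity)]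

theorem stmt_5 (μ σ Γ lam ρ : ℝ) (hσ : 0 < σ) (hΓ : 0 < Γ) (hlam : 0 < lam) (hρ : 0 < ρ)
    (Υ : ℝ) (hΥ : Υ = 1 / (2 * σ ^ 2) + Γ / (ρ * lam)) :
    ∫ x in Set.Ioi (0 : ℝ),
        (1 / lam) * Real.exp (-x / lam) *
          Real.exp (-(Real.sqrt (ρ * x / Γ) - μ) ^ 2 / (2 * σ ^ 2))
      = (Γ / (ρ * lam * Υ)) *
          (Real.exp (-μ ^ 2 / (2 * σ ^ 2))
            + (μ * Real.sqrt Real.pi / (σ ^ 2 * Real.sqrt Υ)) *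
                Real.exp (-μ ^ 2 * Γ / (2 * σ ^ 2 * ρ * lam * Υ)) *
                gaussQ (-(μ * Real.sqrt 2) / (2 * σ ^ 2 * Real.sqrt Υ))) := by
  have hΥ0 : 0 < Υ := by rw [hΥ]; positivity
  have hk : 0 < Γ / ρ := by positivity
  set c : ℝ := μ / (2 * σ ^ 2 * Υ) with hc
  set K : ℝ := -μ ^ 2 * Γ / (2 * σ ^ 2 * ρ * lam * Υ) with hK
  set C : ℝ := 2 * Γ / (ρ * lam) * Real.exp K with hC
  rw [subst_sq (fun x => (1 / lam) * Real.exp (-x / lam) *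
      Real.exp (-(Real.sqrt (ρ * x / Γ) - μ) ^ 2 / (2 * σ ^ 2))) hk]
  have step2 : ∫ t in Set.Ioi (0:ℝ), (Γ / ρ * (2 * t)) *
        ((1 / lam) * Real.exp (-(Γ / ρ * t ^ 2) / lam) *
          Real.exp (-(Real.sqrt (ρ * (Γ / ρ * t ^ 2) / Γ) - μ) ^ 2 / (2 * σ ^ 2)))
      = ∫ t in Set.Ioi (0:ℝ),
          C * ((fun s => (s + c) * Real.exp (-Υ * s ^ 2)) (t + -c)) := by
    refine setIntegral_congr_fun measurableSet_Ioi fun t ht => ?_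
    simp only [Set.mem_Ioi] at ht
    have hsq : ρ * (Γ / ρ * t ^ 2) / Γ = t ^ 2 := by field_simp
    rw [hsq, Real.sqrt_sq ht.le]
    simp only
    have hexp : Real.exp (-(Γ / ρ * t ^ 2) / lam) * Real.exp (-(t - μ) ^ 2 / (2 * σ ^ 2))
        = Real.exp K * Real.exp (-Υ * (t + -c) ^ 2) := by
      rw [← Real.exp_add, ← Real.exp_add]
      congr 1
      rw [hK, hc, hΥ]
      field_simp
      ring
    calc (Γ / ρ * (2 * t)) * ((1 / lam) * Real.exp (-(Γ / ρ * t ^ 2) / lam) *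
            Real.exp (-(t - μ) ^ 2 / (2 * σ ^ 2)))
        = (Γ / ρ * (2 * t)) * (1 / lam) *
            (Real.exp (-(Γ / ρ * t ^ 2) / lam) * Real.exp (-(t - μ) ^ 2 / (2 * σ ^ 2))) := by
          ring
      _ = (Γ / ρ * (2 * t)) * (1 / lam) * (Real.exp K * Real.exp (-Υ * (t + -c) ^ 2)) := by
          rw [hexp]
      _ = C * ((t + -c + c) * Real.exp (-Υ * (t + -c) ^ 2)) := by rw [hC]; ring
  rw [step2, MeasureTheory.integral_const_mul,
    integral_Ioi_comp_add_right (fun s => (s + c) * Real.exp (-Υ * s ^ 2)) 0 (-c), zero_add]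
  have hsplit : ∫ s in Set.Ioi (-c), (s + c) * Real.exp (-Υ * s ^ 2)
      = (∫ s in Set.Ioi (-c), s * Real.exp (-Υ * s ^ 2))
        + c * ∫ s in Set.Ioi (-c), Real.exp (-Υ * s ^ 2) := by
    rw [← MeasureTheory.integral_const_mul, ← MeasureTheory.integral_add
      ((integrable_mul_exp_neg_mul_sq hΥ0).integrableOn)
      (((integrable_exp_neg_mul_sq hΥ0).integrableOn).const_mul c)]
    refine setIntegral_congr_fun measurableSet_Ioi fun s _ => ?_
    ring
  rw [hsplit, tail_mul hΥ0, tail_exp hΥ0]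
  -- algebra
  have hsΥ : 0 < Real.sqrt Υ := Real.sqrt_pos.mpr hΥ0
  have hss : Real.sqrt Υ * Real.sqrt Υ = Υ := Real.mul_self_sqrt hΥ0.le
  have harg : Real.sqrt (2 * Υ) * -c = -(μ * Real.sqrt 2) / (2 * σ ^ 2 * Real.sqrt Υ) := by
    have h2 : (2:ℝ) * σ ^ 2 * Υ = (2 * σ ^ 2 * Real.sqrt Υ) * Real.sqrt Υ := by
      linear_combination (-2 * σ ^ 2 : ℝ) * hss
    rw [Real.sqrt_mul (by norm_num : (0:ℝ) ≤ 2), hc, h2]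
    field_simp
  rw [harg]
  have hdiv : Real.sqrt (Real.pi / Υ) = Real.sqrt Real.pi / Real.sqrt Υ :=
    Real.sqrt_div Real.pi_pos.le Υ
  have e1eq : Real.exp K * Real.exp (-Υ * (-c) ^ 2) = Real.exp (-μ ^ 2 / (2 * σ ^ 2)) := by
    rw [← Real.exp_add]
    congr 1
    rw [hK, hc, hΥ]
    field_simp
    ring
  set Qv : ℝ := gaussQ (-(μ * Real.sqrt 2) / (2 * σ ^ 2 * Real.sqrt Υ)) with hQv
  rw [mul_add, hdiv]
  have key1 : C * (Real.exp (-Υ * (-c) ^ 2) / (2 * Υ))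
      = Γ / (ρ * lam * Υ) * Real.exp (-μ ^ 2 / (2 * σ ^ 2)) := by
    rw [hC, show 2 * Γ / (ρ * lam) * Real.exp K * (Real.exp (-Υ * (-c) ^ 2) / (2 * Υ))
        = 2 * Γ / (ρ * lam) / (2 * Υ) * (Real.exp K * Real.exp (-Υ * (-c) ^ 2)) from by ring,
      e1eq]
    congr 1
    field_simp
  have key2 : C * (c * (Real.sqrt Real.pi / Real.sqrt Υ * Qv))
      = Γ / (ρ * lam * Υ) * (μ * Real.sqrt Real.pi / (σ ^ 2 * Real.sqrt Υ) * Real.exp K * Qv) := by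
    rw [hC, hc]
    rw [show 2 * σ ^ 2 * Υ = 2 * σ ^ 2 * (Real.sqrt Υ * Real.sqrt Υ) from by
        linear_combination (-2 * σ ^ 2 : ℝ) * hss,
      show ρ * lam * Υ = ρ * lam * (Real.sqrt Υ * Real.sqrt Υ) from by
        linear_combination (-ρ * lam : ℝ) * hss]
    field_simp
  rw [key1, key2, ← mul_add]
end

section
/- Let μ > 0, σ > 0, Γ̄ > 0, λ > 0, ρ > 0, and Υ = 1/(2σ²) + Γ̄/(ρλ). Then ∫_{μ²Γ̄/ρ}^∞ (1/λ) exp(−x/λ) · exp(−(√(ρx/Γ̄) − μ)²/(2σ²)) dx = (Γ̄/(ρλΥ)) · [ exp(−μ²Γ̄/(ρλ)) + (μ√π/(σ²√Υ)) · exp(−μ²Γ̄/(2σ²ρλΥ)) · Q(√2·μΓ̄/(ρλ√Υ)) ]. -/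
open MeasureTheory Real

set_option maxHeartbeats 2000000 in
theorem stmt_6 (μ σ Γ lam ρ : ℝ) (hμ : 0 < μ) (hσ : 0 < σ) (hΓ : 0 < Γ)
    (hlam : 0 < lam) (hρ : 0 < ρ)
    (Υ : ℝ) (hΥ : Υ = 1 / (2 * σ ^ 2) + Γ / (ρ * lam)) :
    ∫ x in Set.Ioi (μ ^ 2 * Γ / ρ),
        (1 / lam) * Real.exp (-x / lam) *
          Real.exp (-(Real.sqrt (ρ * x / Γ) - μ) ^ 2 / (2 * σ ^ 2))
      = (Γ / (ρ * lam * Υ)) *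
          (Real.exp (-μ ^ 2 * Γ / (ρ * lam))
            + (μ * Real.sqrt Real.pi / (σ ^ 2 * Real.sqrt Υ)) *
                Real.exp (-μ ^ 2 * Γ / (2 * σ ^ 2 * ρ * lam * Υ)) *
                gaussQ (Real.sqrt 2 * μ * Γ / (ρ * lam * Real.sqrt Υ))) := by
  have hσ2 : (0:ℝ) < σ ^ 2 := by positivity
  have hΥ0 : 0 < Υ := by rw [hΥ]; positivity
  obtain ⟨m, hm⟩ : ∃ m : ℝ, m = μ / (2 * σ ^ 2 * Υ) := ⟨_, rfl⟩
  have hm0 : 0 < m := by rw [hm]; positivity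
  have h2σΥ : 1 < 2 * σ ^ 2 * Υ := by
    rw [hΥ, mul_add]
    have h1 : 2 * σ ^ 2 * (1 / (2 * σ ^ 2)) = 1 := by field_simp
    have h2 : 0 < 2 * σ ^ 2 * (Γ / (ρ * lam)) := by positivity
    linarith
  have hmμ : m < μ := by rw [hm]; exact div_lt_self hμ h2σΥ
  -- Step 1: substitution x = Γ y² / ρ
  have himg : (fun y : ℝ => Γ * y ^ 2 / ρ) '' Set.Ioi μ = Set.Ioi (μ ^ 2 * Γ / ρ) := by
    ext x
    simp only [Set.mem_image, Set.mem_Ioi]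
    constructor
    · rintro ⟨y, hy, rfl⟩
      rw [div_lt_div_iff₀ hρ hρ]
      have h2 : μ ^ 2 < y ^ 2 := by nlinarith
      nlinarith [mul_pos (sub_pos.mpr h2) (mul_pos hΓ hρ)]
    · intro hx
      have hx0 : 0 < x := lt_trans (by positivity) hx
      have h1 : μ ^ 2 < ρ * x / Γ := by
        rw [lt_div_iff₀ hΓ]
        rw [div_lt_iff₀ hρ] at hx
        nlinarith
      refine ⟨Real.sqrt (ρ * x / Γ), ?_, ?_⟩
      · exact (Real.lt_sqrt (by positivity)).mpr h1
      · rw [Real.sq_sqrt (by positivity)]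
        field_simp
  have hderiv : ∀ y ∈ Set.Ioi μ, HasDerivWithinAt (fun y : ℝ => Γ * y ^ 2 / ρ)
      (Γ * (2 * y ^ 1) / ρ) (Set.Ioi μ) y := fun y _ =>
    (((hasDerivAt_pow 2 y).const_mul Γ).div_const ρ).hasDerivWithinAt
  have hinj : Set.InjOn (fun y : ℝ => Γ * y ^ 2 / ρ) (Set.Ioi μ) := by
    intro a ha b hb h
    simp only [Set.mem_Ioi] at ha hb
    simp only at h
    have h' : a ^ 2 = b ^ 2 := by
      field_simp at h
      linarith
    apply le_antisymm <;> nlinarith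
  rw [← himg, integral_image_eq_integral_abs_deriv_smul measurableSet_Ioi hderiv hinj]
  -- Step 2: rewrite integrand (complete the square)
  have hexp : ∀ y : ℝ, -(Γ * y ^ 2 / ρ) / lam + -(y - μ) ^ 2 / (2 * σ ^ 2)
      = -Υ * (y - m) ^ 2 + -μ ^ 2 * Γ / (2 * σ ^ 2 * ρ * lam * Υ) := by
    intro y
    rw [hm, hΥ]
    field_simp
    ring
  obtain ⟨K, hK⟩ : ∃ K : ℝ, K = -μ ^ 2 * Γ / (2 * σ ^ 2 * ρ * lam * Υ) := ⟨_, rfl⟩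
  rw [← hK]
  obtain ⟨C, hC⟩ : ∃ C : ℝ, C = 2 * Γ / (ρ * lam) * Real.exp K := ⟨_, rfl⟩
  have hcongr : Set.EqOn
      (fun y => |Γ * (2 * y ^ 1) / ρ| • ((1 / lam) * Real.exp (-(Γ * y ^ 2 / ρ) / lam) *
        Real.exp (-(Real.sqrt (ρ * (Γ * y ^ 2 / ρ) / Γ) - μ) ^ 2 / (2 * σ ^ 2))))
      (fun y => C * ((y - m) * Real.exp (-Υ * (y - m) ^ 2))
        + C * m * Real.exp (-Υ * (y - m) ^ 2)) (Set.Ioi μ) := by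
    intro y hy
    have hy0 : 0 < y := lt_trans hμ hy
    have hs : Real.sqrt (ρ * (Γ * y ^ 2 / ρ) / Γ) = y := by
      rw [show ρ * (Γ * y ^ 2 / ρ) / Γ = y ^ 2 by field_simp]
      exact Real.sqrt_sq hy0.le
    have habs : |Γ * (2 * y ^ 1) / ρ| = Γ * (2 * y) / ρ := by
      rw [pow_one]
      exact abs_of_pos (by positivity)
    simp only [hs, habs, smul_eq_mul]
    have e1 : -(Γ * y ^ 2 / ρ) / lam + -(y - μ) ^ 2 / (2 * σ ^ 2) = -Υ * (y - m) ^ 2 + K := by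
      rw [hK]; exact hexp y
    calc Γ * (2 * y) / ρ * (1 / lam * Real.exp (-(Γ * y ^ 2 / ρ) / lam) *
          Real.exp (-(y - μ) ^ 2 / (2 * σ ^ 2)))
        = 2 * Γ / (ρ * lam) * y * Real.exp (-Υ * (y - m) ^ 2 + K) := by
          have e2 : Real.exp (-(Γ * y ^ 2 / ρ) / lam) * Real.exp (-(y - μ) ^ 2 / (2 * σ ^ 2))
              = Real.exp (-Υ * (y - m) ^ 2) * Real.exp K := by
            rw [← Real.exp_add, ← Real.exp_add, e1]
          rw [Real.exp_add]
          linear_combination (2 * Γ * y / (ρ * lam)) * e2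
      _ = C * ((y - m) * Real.exp (-Υ * (y - m) ^ 2)) + C * m * Real.exp (-Υ * (y - m) ^ 2) := by
          rw [Real.exp_add, hC]
          ring
  rw [setIntegral_congr_fun measurableSet_Ioi hcongr]
  -- derivative facts for the first piece
  have hd1 : ∀ y : ℝ, HasDerivAt (fun y => -Real.exp (-Υ * (y - m) ^ 2) / (2 * Υ))
      ((y - m) * Real.exp (-Υ * (y - m) ^ 2)) y := by
    intro y
    have h1 : HasDerivAt (fun y : ℝ => -Υ * (y - m) ^ 2) (-Υ * (2 * (y - m))) y := by
      simpa using (((hasDerivAt_id y).sub_const m).pow 2).const_mul (-Υ)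
    have h2 := (h1.exp.div_const (2 * Υ)).neg
    have e : (fun y => -Real.exp (-Υ * (y - m) ^ 2) / (2 * Υ))
        = -fun x => Real.exp (-Υ * (x - m) ^ 2) / (2 * Υ) := by
      funext x; simp [neg_div]
    rw [e]
    refine h2.congr_deriv ?_
    rw [← neg_div, div_eq_iff (by positivity : (2 * Υ : ℝ) ≠ 0)]
    ring
  have htend : Filter.Tendsto (fun y => -Real.exp (-Υ * (y - m) ^ 2) / (2 * Υ))
      Filter.atTop (nhds 0) := by
    have h1 : Filter.Tendsto (fun y : ℝ => -Υ * (y - m) ^ 2) Filter.atTop Filter.atBot := by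
      apply Filter.Tendsto.const_mul_atTop_of_neg (by linarith)
      exact (Filter.tendsto_pow_atTop (by norm_num)).comp
        (Filter.tendsto_atTop_add_const_right _ (-m) Filter.tendsto_id)
    have := (Real.tendsto_exp_atBot.comp h1).neg.div_const (2 * Υ)
    simpa using this
  have hpos1 : ∀ x ∈ Set.Ioi μ, 0 ≤ (x - m) * Real.exp (-Υ * (x - m) ^ 2) := by
    intro x hx
    have : μ < x := hx
    exact mul_nonneg (by linarith) (Real.exp_pos _).le
  have hInt1 : IntegrableOn (fun y => (y - m) * Real.exp (-Υ * (y - m) ^ 2)) (Set.Ioi μ) :=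
    integrableOn_Ioi_deriv_of_nonneg' (fun x _ => hd1 x) hpos1 htend
  have hInt2 : IntegrableOn (fun y => Real.exp (-Υ * (y - m) ^ 2)) (Set.Ioi μ) :=
    ((integrable_exp_neg_mul_sq hΥ0).comp_sub_right m).integrableOn
  rw [integral_add (hInt1.const_mul C) (hInt2.const_mul (C * m)),
    integral_const_mul, integral_const_mul]
  -- value of the first piece
  have hval1 : ∫ y in Set.Ioi μ, (y - m) * Real.exp (-Υ * (y - m) ^ 2)
      = Real.exp (-Υ * (μ - m) ^ 2) / (2 * Υ) := by
    rw [integral_Ioi_of_hasDerivAt_of_nonneg' (fun x _ => hd1 x) hpos1 htend]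
    ring
  -- value of the second piece via substitution u = √(2Υ)(y - m)
  have hs2 : (0:ℝ) < Real.sqrt (2 * Υ) := Real.sqrt_pos.mpr (by positivity)
  have hs2sq : Real.sqrt (2 * Υ) ^ 2 = 2 * Υ := Real.sq_sqrt (by positivity)
  have hval2 : ∫ y in Set.Ioi μ, Real.exp (-Υ * (y - m) ^ 2)
      = (1 / Real.sqrt (2 * Υ)) *
          ∫ u in Set.Ioi (Real.sqrt (2 * Υ) * (μ - m)), Real.exp (-u ^ 2 / 2) := by
    have himg2 : (fun u : ℝ => u / Real.sqrt (2 * Υ) + m) '' Set.Ioi (Real.sqrt (2 * Υ) * (μ - m))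
        = Set.Ioi μ := by
      ext y
      simp only [Set.mem_image, Set.mem_Ioi]
      constructor
      · rintro ⟨u, hu, rfl⟩
        have h' : μ - m < u / Real.sqrt (2 * Υ) := by
          rw [lt_div_iff₀ hs2]
          nlinarith
        linarith
      · intro hy
        refine ⟨Real.sqrt (2 * Υ) * (y - m), ?_, ?_⟩
        · exact mul_lt_mul_of_pos_left (by linarith) hs2
        · field_simp
          ring
    have hd2 : ∀ u ∈ Set.Ioi (Real.sqrt (2 * Υ) * (μ - m)),
        HasDerivWithinAt (fun u : ℝ => u / Real.sqrt (2 * Υ) + m) (1 / Real.sqrt (2 * Υ))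
          (Set.Ioi (Real.sqrt (2 * Υ) * (μ - m))) u := fun u _ =>
      (((hasDerivAt_id u).div_const _).add_const m).hasDerivWithinAt
    have hinj2 : Set.InjOn (fun u : ℝ => u / Real.sqrt (2 * Υ) + m)
        (Set.Ioi (Real.sqrt (2 * Υ) * (μ - m))) := by
      intro a _ b _ h
      simp only at h
      field_simp [hs2.ne'] at h
      linarith
    rw [← himg2, integral_image_eq_integral_abs_deriv_smul measurableSet_Ioi hd2 hinj2]
    rw [← integral_const_mul]
    apply setIntegral_congr_fun measurableSet_Ioi
    intro u _
    simp only [smul_eq_mul]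
    rw [abs_of_pos (by positivity : (0:ℝ) < 1 / Real.sqrt (2 * Υ))]
    congr 1
    rw [add_sub_cancel_right, div_pow, hs2sq]
    field_simp [hΥ0.ne']
  rw [hval1, hval2]
  -- rewrite the lower limit of the Gaussian tail integral
  have hΥsq : Real.sqrt Υ * Real.sqrt Υ = Υ := Real.mul_self_sqrt hΥ0.le
  have hsΥ : (0:ℝ) < Real.sqrt Υ := Real.sqrt_pos.mpr hΥ0
  have hμm : μ - m = μ * Γ / (ρ * lam * Υ) := by
    rw [hm, hΥ]
    field_simp
    ring
  have hx0 : Real.sqrt (2 * Υ) * (μ - m) = Real.sqrt 2 * μ * Γ / (ρ * lam * Real.sqrt Υ) := by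
    rw [Real.sqrt_mul (by norm_num : (0:ℝ) ≤ 2), hμm]
    rw [eq_div_iff (by positivity : ρ * lam * Real.sqrt Υ ≠ 0)]
    field_simp
    linear_combination hΥsq
  rw [hx0]
  -- express the tail integral via gaussQ
  have hQ : ∫ u in Set.Ioi (Real.sqrt 2 * μ * Γ / (ρ * lam * Real.sqrt Υ)), Real.exp (-u ^ 2 / 2)
      = Real.sqrt (2 * Real.pi) *
          gaussQ (Real.sqrt 2 * μ * Γ / (ρ * lam * Real.sqrt Υ)) := by
    rw [gaussQ, ← mul_assoc, mul_one_div, div_self (by positivity), one_mul]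
  rw [hQ]
  -- final algebra
  have hE1 : Real.exp K * Real.exp (-Υ * (μ - m) ^ 2) = Real.exp (-μ ^ 2 * Γ / (ρ * lam)) := by
    rw [← Real.exp_add]
    congr 1
    rw [hK, hm, hΥ]
    field_simp
    ring
  have hsr : (1 / Real.sqrt (2 * Υ)) * Real.sqrt (2 * Real.pi)
      = Real.sqrt Real.pi / Real.sqrt Υ := by
    rw [Real.sqrt_mul (by norm_num : (0:ℝ) ≤ 2), Real.sqrt_mul (by norm_num : (0:ℝ) ≤ 2)]
    have h2 : Real.sqrt 2 ≠ 0 := by positivity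
    field_simp
  have hterm1 : C * (Real.exp (-Υ * (μ - m) ^ 2) / (2 * Υ))
      = Γ / (ρ * lam * Υ) * Real.exp (-μ ^ 2 * Γ / (ρ * lam)) := by
    rw [hC, ← hE1]
    field_simp
  have hterm2 : C * m * ((1 / Real.sqrt (2 * Υ)) * Real.sqrt (2 * Real.pi))
      = Γ / (ρ * lam * Υ) * (μ * Real.sqrt Real.pi / (σ ^ 2 * Real.sqrt Υ)) * Real.exp K := by
    rw [hC, hm, hsr]
    field_simp
  calc C * (Real.exp (-Υ * (μ - m) ^ 2) / (2 * Υ))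
      + C * m * ((1 / Real.sqrt (2 * Υ)) *
          (Real.sqrt (2 * Real.pi) * gaussQ (Real.sqrt 2 * μ * Γ / (ρ * lam * Real.sqrt Υ))))
      = C * (Real.exp (-Υ * (μ - m) ^ 2) / (2 * Υ))
        + (C * m * ((1 / Real.sqrt (2 * Υ)) * Real.sqrt (2 * Real.pi))) *
            gaussQ (Real.sqrt 2 * μ * Γ / (ρ * lam * Real.sqrt Υ)) := by ring
    _ = Γ / (ρ * lam * Υ) *
          (Real.exp (-μ ^ 2 * Γ / (ρ * lam))
            + (μ * Real.sqrt Real.pi / (σ ^ 2 * Real.sqrt Υ)) * Real.exp K *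
                gaussQ (Real.sqrt 2 * μ * Γ / (ρ * lam * Real.sqrt Υ))) := by
        rw [hterm1, hterm2]
        ring
end

section
/- Let F(x) = 1 − ξ·Q((√(x/Γ̄) − μ)/σ) for x ≥ 0, with μ, σ, Γ̄ > 0 and ξ = 1/Q(−μ/σ), and let X have CDF F. Let Z be an independent random variable that is the maximum of L i.i.d. exponentials with mean λ. Then P[(1+X)/(1+Z) < ρ] = 1 − ∑_{m=1}^{1}∑_{l=1}^{L} (−1)^{1+l} (L choose l) ξ ∫_0^∞ Q((√((ρ−1+ρx)/Γ̄) − μ)/σ) · (l/λ) exp(−lx/λ) dx; that is, the secrecy outage probability equals 1 − ξ ∑_{l=1}^{L} (−1)^{l+1} (L choose l) ∫_0^∞ Q((√((ρ−1+ρx)/Γ̄) − μ)/σ) (l/λ) e^{−lx/λ} dx. -/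
open MeasureTheory ProbabilityTheory Real Finset

open Filter


lemma integrable_gauss : Integrable (fun u : ℝ => Real.exp (-u ^ 2 / 2)) := by
  have := integrable_exp_neg_mul_sq (by norm_num : (0:ℝ) < 1/2)
  convert this using 2 with u; ring_nf

lemma gaussQ_nonneg (x : ℝ) : 0 ≤ gaussQ x := by
  apply mul_nonneg (by positivity)
  exact setIntegral_nonneg measurableSet_Ioi (fun u _ => (Real.exp_pos _).le)

lemma gaussQ_le_one (x : ℝ) : gaussQ x ≤ 1 := by
  have h1 : ∫ u in Set.Ioi x, Real.exp (-u ^ 2 / 2) ≤ ∫ u : ℝ, Real.exp (-u ^ 2 / 2) := by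
    apply setIntegral_le_integral integrable_gauss
    filter_upwards with u using (Real.exp_pos _).le
  have h2 : ∫ u : ℝ, Real.exp (-u ^ 2 / 2) = Real.sqrt (2 * Real.pi) := by
    have := integral_gaussian (1/2)
    rw [show π / (1/2) = 2 * π by ring] at this
    rw [← this]; congr 1 with u; ring_nf
  have hs : 0 < Real.sqrt (2 * Real.pi) := Real.sqrt_pos.2 (by positivity)
  rw [gaussQ, one_div]
  rw [inv_mul_le_iff₀ hs, mul_one, ← h2]; exact h1

lemma gaussQ_pos (x : ℝ) : 0 < gaussQ x := by
  apply mul_pos (by positivity)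
  rw [setIntegral_pos_iff_support_of_nonneg_ae]
  · have : (Function.support fun u : ℝ => Real.exp (-u ^ 2 / 2)) = Set.univ := by
      ext u; simp [Function.support, (Real.exp_pos _).ne']
    rw [this, Set.univ_inter]
    simp [Real.volume_Ioi]
  · filter_upwards with u using (Real.exp_pos _).le
  · exact integrable_gauss.integrableOn

lemma continuous_gaussQ : Continuous gaussQ := by
  apply Continuous.mul continuous_const
  have key : ∀ x : ℝ, ∫ u in Set.Ioi x, Real.exp (-u ^ 2 / 2)
      = (∫ u : ℝ, Real.exp (-u ^ 2 / 2)) - ((∫ u in Set.Iic (0:ℝ), Real.exp (-u ^ 2 / 2)) + ∫ u in (0:ℝ)..x, Real.exp (-u ^ 2 / 2)) := by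
    intro x
    have hIic : (∫ u in Set.Iic (0:ℝ), Real.exp (-u ^ 2 / 2)) + ∫ u in (0:ℝ)..x, Real.exp (-u ^ 2 / 2)
        = ∫ u in Set.Iic x, Real.exp (-u ^ 2 / 2) := by
      rw [← intervalIntegral.integral_Iic_sub_Iic integrable_gauss.integrableOn integrable_gauss.integrableOn]
      ring
    rw [hIic, eq_sub_iff_add_eq, add_comm,
      intervalIntegral.integral_Iic_add_Ioi (integrable_gauss.integrableOn) (integrable_gauss.integrableOn)]
  simp_rw [key]
  apply Continuous.sub continuous_const
  apply Continuous.add continuous_const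
  exact intervalIntegral.continuous_primitive (fun a b => integrable_gauss.intervalIntegrable) 0


lemma prob_lt_eq {Ω : Type*} [MeasureSpace Ω] [IsProbabilityMeasure (ℙ : Measure Ω)]
    (X : Ω → ℝ) (F : ℝ → ℝ) (hFc : Continuous F) (hF0 : F 0 = 0)
    (hcdf : ∀ x : ℝ, 0 ≤ x → (ℙ {ω | X ω ≤ x}).toReal = F x)
    (t : ℝ) (ht : 0 ≤ t) : (ℙ {ω | X ω < t}).toReal = F t := by
  rcases eq_or_lt_of_le ht with h0 | hpos
  · have h1 : (ℙ {ω | X ω ≤ 0}) = 0 := by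
      have := hcdf 0 le_rfl
      rw [hF0] at this
      exact ((ENNReal.toReal_eq_zero_iff _).1 this).resolve_right (measure_ne_top _ _)
    have h2 : ℙ {ω | X ω < t} = 0 := by
      apply measure_mono_null _ h1
      intro ω hω
      simp only [Set.mem_setOf_eq] at *
      exact le_of_lt (h0 ▸ hω)
    rw [h2, ← h0, hF0]; simp
  · set u : ℕ → ℝ := fun n => t * (1 - 1 / (n + 2)) with hu
    have hfrac_pos : ∀ n : ℕ, 0 < 1 / ((n : ℝ) + 2) := fun n => by positivity
    have hfrac_le : ∀ n : ℕ, 1 / ((n : ℝ) + 2) ≤ 1 := fun n => by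
      rw [div_le_one (by positivity)]; linarith [Nat.cast_nonneg (α := ℝ) n]
    have hu_nonneg : ∀ n, 0 ≤ u n := fun n =>
      mul_nonneg hpos.le (by linarith [hfrac_le n])
    have hu_lt : ∀ n, u n < t := fun n => by
      have h := hfrac_pos n
      calc u n = t - t * (1/((n:ℝ)+2)) := by ring
        _ < t := by nlinarith
    have hu_mono : Monotone u := by
      intro m n hmn
      apply mul_le_mul_of_nonneg_left _ hpos.le
      have : 1 / ((n : ℝ) + 2) ≤ 1 / ((m : ℝ) + 2) := by
        apply one_div_le_one_div_of_le (by positivity)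
        have : (m : ℝ) ≤ n := Nat.cast_le.2 hmn
        linarith
      linarith
    have hu_tendsto : Tendsto u atTop (nhds t) := by
      have h2 : Tendsto (fun n : ℕ => 1 / ((n : ℝ) + 2)) atTop (nhds 0) := by
        simp only [one_div]
        apply Tendsto.comp tendsto_inv_atTop_zero
        exact (tendsto_natCast_atTop_atTop (R := ℝ)).atTop_add tendsto_const_nhds
      have := ((tendsto_const_nhds (x := (1:ℝ)) (f := atTop (α := ℕ))).sub h2).const_mul t
      rw [hu]
      simp only [one_div] at this ⊢
      convert this using 2
      ring
    have hUnion : (⋃ n, {ω | X ω ≤ u n}) = {ω | X ω < t} := by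
      ext ω
      simp only [Set.mem_iUnion, Set.mem_setOf_eq]
      constructor
      · rintro ⟨n, hn⟩; exact lt_of_le_of_lt hn (hu_lt n)
      · intro hω
        have : ∀ᶠ n in atTop, X ω < u n := hu_tendsto.eventually_const_lt hω
        obtain ⟨n, hn⟩ := this.exists
        exact ⟨n, hn.le⟩
    have hmeas : Tendsto (fun n => ℙ {ω | X ω ≤ u n}) atTop (nhds (ℙ {ω | X ω < t})) := by
      rw [← hUnion]
      exact tendsto_measure_iUnion_atTop (fun m n hmn ω hω => le_trans hω (hu_mono hmn))
    have hreal : Tendsto (fun n => (ℙ {ω | X ω ≤ u n}).toReal) atTop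
        (nhds ((ℙ {ω | X ω < t}).toReal)) :=
      (ENNReal.tendsto_toReal (measure_ne_top _ _)).comp hmeas
    have hF : Tendsto (fun n => F (u n)) atTop (nhds (F t)) :=
      (hFc.tendsto t).comp hu_tendsto
    have : (fun n => (ℙ {ω | X ω ≤ u n}).toReal) = fun n => F (u n) := by
      funext n; exact hcdf (u n) (hu_nonneg n)
    rw [this] at hreal
    exact tendsto_nhds_unique hreal hF


noncomputable def wdens (L : ℕ) (lam : ℝ) (x : ℝ) : ℝ :=
  ∑ l ∈ Finset.Icc 1 L, (-1 : ℝ) ^ (l + 1) * (L.choose l : ℝ) *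
    (((l : ℝ) / lam) * Real.exp (-(l : ℝ) * x / lam))

lemma sum_Icc_shift (L : ℕ) (f : ℕ → ℝ) : ∑ l ∈ Finset.Icc 1 L, f l = ∑ k ∈ Finset.range L, f (1 + k) := by
  rw [← Finset.Ico_add_one_right_eq_Icc, Finset.sum_Ico_eq_sum_range]
  simp

lemma wdens_eq (L : ℕ) (lam : ℝ) (hL : 1 ≤ L) (hlam : 0 < lam) (x : ℝ) :
    wdens L lam x = ((L : ℝ) / lam) * Real.exp (-x / lam) * (1 - Real.exp (-x / lam)) ^ (L - 1) := by
  have hexp : (1 - Real.exp (-x / lam)) ^ (L - 1)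
      = ∑ k ∈ Finset.range L, (-Real.exp (-x / lam)) ^ k * (L - 1).choose k := by
    have := add_pow (-Real.exp (-x / lam)) 1 (L - 1)
    simp only [one_pow, mul_one] at this
    rw [show (1 : ℝ) - Real.exp (-x/lam) = -Real.exp (-x/lam) + 1 by ring, this,
      Nat.sub_add_cancel hL]
  rw [wdens, sum_Icc_shift L, hexp, Finset.mul_sum]
  apply Finset.sum_congr rfl
  intro k _
  have hchoose : (L : ℝ) * ((L-1).choose k : ℝ) = (L.choose (k+1) : ℝ) * (k+1 : ℕ) := by
    have := Nat.add_one_mul_choose_eq (L-1) k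
    rw [Nat.sub_add_cancel hL] at this
    exact_mod_cast congrArg (Nat.cast (R := ℝ)) this
  rw [Nat.add_comm 1 k]
  have hexp2 : Real.exp (-(k + 1 : ℕ) * x / lam) = Real.exp (-x/lam) * Real.exp (-x/lam) ^ k := by
    rw [← Real.exp_nat_mul, ← Real.exp_add]
    congr 1; push_cast; ring
  rw [hexp2, neg_pow, show k+1+1 = k+2 by ring, pow_add]
  push_cast at hchoose ⊢
  have h1 : ((-1:ℝ))^2 = 1 := by norm_num
  rw [h1, mul_one]
  have hl : (lam:ℝ) ≠ 0 := ne_of_gt hlam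
  field_simp
  simp only [← neg_div]
  linear_combination (-(Real.exp (-x/lam)^k * (-1:ℝ)^k)) * hchoose


lemma continuous_wdens (L : ℕ) (lam : ℝ) : Continuous (wdens L lam) := by
  apply continuous_finset_sum
  intro l _
  apply Continuous.mul continuous_const
  apply Continuous.mul continuous_const
  apply Real.continuous_exp.comp
  apply Continuous.div_const
  exact (continuous_const.mul continuous_id)

lemma wdens_nonneg (L : ℕ) (lam : ℝ) (hL : 1 ≤ L) (hlam : 0 < lam) {x : ℝ} (hx : 0 ≤ x) :
    0 ≤ wdens L lam x := by
  rw [wdens_eq L lam hL hlam]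
  have h1 : Real.exp (-x/lam) ≤ 1 := by
    rw [← Real.exp_zero]
    apply Real.exp_le_exp.mpr
    have h0 : 0 ≤ x / lam := div_nonneg hx hlam.le
    rw [neg_div]
    linarith
  have h2 : (0:ℝ) ≤ 1 - Real.exp (-x/lam) := by linarith
  positivity

lemma hasDerivAt_G (L : ℕ) (lam : ℝ) (hL : 1 ≤ L) (hlam : 0 < lam) (x : ℝ) :
    HasDerivAt (fun y => (1 - Real.exp (-y/lam))^L) (wdens L lam x) x := by
  rw [wdens_eq L lam hL hlam]
  have h1 : HasDerivAt (fun y : ℝ => -y/lam) (-1/lam) x := by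
    simpa using ((hasDerivAt_id x).neg.div_const lam)
  have h2 := h1.exp
  have h3 : HasDerivAt (fun y : ℝ => 1 - Real.exp (-y/lam))
      (Real.exp (-x/lam)/lam) x := by
    have := (hasDerivAt_const x (1:ℝ)).sub h2
    refine this.congr_deriv ?_
    ring
  have h4 := h3.pow L
  refine h4.congr_deriv ?_
  ring

lemma integral_wdens_Ioc (L : ℕ) (lam : ℝ) (hL : 1 ≤ L) (hlam : 0 < lam) (b : ℝ) (hb : 0 ≤ b) :
    ∫ x in Set.Ioc 0 b, wdens L lam x = (1 - Real.exp (-b/lam))^L := by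
  rw [← intervalIntegral.integral_of_le hb]
  rw [intervalIntegral.integral_eq_sub_of_hasDerivAt
    (fun x _ => hasDerivAt_G L lam hL hlam x)
    ((continuous_wdens L lam).intervalIntegrable 0 b)]
  have h0 : (1 - Real.exp (-0/lam))^L = 0 := by
    rw [neg_zero, zero_div, Real.exp_zero, sub_self]
    exact zero_pow (by omega : L ≠ 0)
  rw [h0, sub_zero]

lemma integrable_wdens (L : ℕ) (lam : ℝ) (hlam : 0 < lam) : IntegrableOn (wdens L lam) (Set.Ioi 0) := by
  apply integrable_finset_sum
  intro l hl
  have hl1 : 1 ≤ l := (Finset.mem_Icc.1 hl).1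
  have hpos : 0 < (l : ℝ) / lam := div_pos (by exact_mod_cast hl1) hlam
  have h := exp_neg_integrableOn_Ioi 0 hpos
  have h2 : IntegrableOn (fun x : ℝ => Real.exp (-(l:ℝ) * x / lam)) (Set.Ioi 0) := by
    have heq : (fun x : ℝ => Real.exp (-(l:ℝ) * x / lam))
        = (fun x : ℝ => Real.exp (-((l:ℝ)/lam) * x)) := by
      funext x; congr 1; ring
    rw [heq]; exact h
  exact (h2.const_mul ((l:ℝ)/lam)).const_mul ((-1:ℝ)^(l+1) * (L.choose l : ℝ))
noncomputable def nud (L : ℕ) (lam : ℝ) : Measure ℝ :=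
  (volume.restrict (Set.Ioi 0)).withDensity (fun x => ENNReal.ofReal (wdens L lam x))

lemma nud_Iic (L : ℕ) (lam : ℝ) (hL : 1 ≤ L) (hlam : 0 < lam) (b : ℝ) :
    nud L lam (Set.Iic b)
      = if 0 ≤ b then ENNReal.ofReal ((1 - Real.exp (-b/lam))^L) else 0 := by
  rw [nud, withDensity_apply _ measurableSet_Iic,
    Measure.restrict_restrict measurableSet_Iic,
    show Set.Iic b ∩ Set.Ioi 0 = Set.Ioc 0 b by rw [Set.inter_comm, Set.Ioi_inter_Iic]]
  by_cases hb : 0 ≤ b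
  · rw [if_pos hb, ← integral_wdens_Ioc L lam hL hlam b hb]
    rw [← ofReal_integral_eq_lintegral_ofReal]
    · exact (continuous_wdens L lam).integrableOn_Ioc
    · filter_upwards [ae_restrict_mem measurableSet_Ioc] with x hx
      exact wdens_nonneg L lam hL hlam hx.1.le
  · rw [if_neg hb, Set.Ioc_eq_empty (fun h => hb (le_of_lt h)), Measure.restrict_empty]
    simp

lemma nud_finite (L : ℕ) (lam : ℝ) (hlam : 0 < lam) : IsFiniteMeasure (nud L lam) := by
  constructor
  rw [nud, withDensity_apply _ MeasurableSet.univ, Measure.restrict_univ,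
    ← ofReal_integral_eq_lintegral_ofReal (integrable_wdens L lam hlam)]
  · exact ENNReal.ofReal_lt_top
  · filter_upwards [ae_restrict_mem measurableSet_Ioi] with x hx
    by_cases hL : 1 ≤ L
    · exact wdens_nonneg L lam hL hlam hx.le
    · have : L = 0 := by omega
      simp [this, wdens]

lemma nud_integral (L : ℕ) (lam : ℝ) (hL : 1 ≤ L) (hlam : 0 < lam) (g : ℝ → ℝ)
    (hg : Measurable g) :
    ∫ x, g x ∂(nud L lam) = ∫ x in Set.Ioi 0, wdens L lam x * g x := by
  have hd : Measurable (fun x => (wdens L lam x).toNNReal) :=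
    (continuous_wdens L lam).measurable.real_toNNReal
  have : nud L lam
      = (volume.restrict (Set.Ioi 0)).withDensity (fun x => ((wdens L lam x).toNNReal : ENNReal)) := by
    rfl
  rw [this, integral_withDensity_eq_integral_smul hd]
  apply setIntegral_congr_ae measurableSet_Ioi
  filter_upwards with x hx
  rw [NNReal.smul_def, Real.coe_toNNReal _ (wdens_nonneg L lam hL hlam hx.le), smul_eq_mul]

theorem stmt_17 {Ω : Type*} [MeasureSpace Ω] [IsProbabilityMeasure (ℙ : Measure Ω)]
    (L : ℕ) (hL : 1 ≤ L) (μ σ Γ lam ρ : ℝ)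
    (hμ : 0 < μ) (hσ : 0 < σ) (hΓ : 0 < Γ) (hlam : 0 < lam) (hρ : 1 ≤ ρ)
    (X : Ω → ℝ) (Z : Fin L → Ω → ℝ)
    (hX : Measurable X) (hZ : ∀ l, Measurable (Z l))
    (hXnn : ∀ ω, 0 ≤ X ω) (hZnn : ∀ l ω, 0 ≤ Z l ω)
    (hindep : iIndepFun (Sum.elim (fun _ : Unit => X) Z) ℙ)
    (hXcdf : ∀ x : ℝ, 0 ≤ x →
      (ℙ {ω | X ω ≤ x}).toReal
        = 1 - (gaussQ (-μ / σ))⁻¹ * gaussQ ((Real.sqrt (x / Γ) - μ) / σ))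
    (hZtail : ∀ l (x : ℝ), 0 ≤ x → (ℙ {ω | x < Z l ω}).toReal = Real.exp (-x / lam)) :
    (ℙ {ω | (1 + X ω) / (1 + ⨆ l, Z l ω) < ρ}).toReal
      = 1 - (gaussQ (-μ / σ))⁻¹ *
          ∑ l ∈ Finset.Icc 1 L,
            (-1 : ℝ) ^ (l + 1) * (L.choose l : ℝ) *
              ∫ x in Set.Ioi (0 : ℝ),
                gaussQ ((Real.sqrt ((ρ - 1 + ρ * x) / Γ) - μ) / σ) *
                  (((l : ℝ) / lam) * Real.exp (-(l : ℝ) * x / lam)) := by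
  classical
  set ξ : ℝ := (gaussQ (-μ / σ))⁻¹ with hξ
  set W : Ω → ℝ := fun ω => ⨆ l, Z l ω with hWdef
  have hWm : Measurable W := Measurable.iSup hZ
  have hbdd : ∀ ω, BddAbove (Set.range fun l => Z l ω) :=
    fun ω => (Set.finite_range _).bddAbove
  have l0 : Fin L := ⟨0, hL⟩
  haveI : Nonempty (Fin L) := ⟨l0⟩
  have hWnn : ∀ ω, 0 ≤ W ω := fun ω => le_trans (hZnn l0 ω) (le_ciSup (hbdd ω) l0)
  have hWiff : ∀ ω (b : ℝ), (W ω ≤ b ↔ ∀ l, Z l ω ≤ b) :=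
    fun ω b => ciSup_le_iff (hbdd ω)
  set f := Sum.elim (fun _ : Unit => X) Z with hfdef
  have hfm : ∀ i, Measurable (f i) := by rintro (u | l); exacts [hX, hZ l]
  -- CDF of each Z l
  have hZcdf : ∀ (l : Fin L) (b : ℝ), 0 ≤ b →
      ℙ {ω | Z l ω ≤ b} = ENNReal.ofReal (1 - Real.exp (-b / lam)) := by
    intro l b hb
    have hmeas : MeasurableSet {ω | b < Z l ω} := measurableSet_lt measurable_const (hZ l)
    have hcompl : {ω | Z l ω ≤ b} = {ω | b < Z l ω}ᶜ := by
      ext ω; simp [not_lt]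
    have htail : ℙ {ω | b < Z l ω} = ENNReal.ofReal (Real.exp (-b / lam)) := by
      rw [← hZtail l b hb, ENNReal.ofReal_toReal (measure_ne_top _ _)]
    rw [hcompl, measure_compl hmeas (measure_ne_top _ _), htail, measure_univ,
      ← ENNReal.ofReal_one, ← ENNReal.ofReal_sub _ (Real.exp_pos _).le]
  -- CDF of W
  have hWcdf : ∀ b : ℝ, 0 ≤ b →
      Measure.map W ℙ (Set.Iic b) = ENNReal.ofReal ((1 - Real.exp (-b / lam)) ^ L) := by
    intro b hb
    rw [Measure.map_apply hWm measurableSet_Iic]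
    have hset : W ⁻¹' Set.Iic b = ⋂ i ∈ Finset.univ.image Sum.inr, f i ⁻¹' Set.Iic b := by
      ext ω
      simp only [Set.mem_preimage, Set.mem_Iic, Set.mem_iInter, Finset.mem_image,
        Finset.mem_univ, true_and, hfdef]
      rw [hWiff ω b]
      constructor
      · rintro h i ⟨l, rfl⟩; exact h l
      · intro h l; exact h (Sum.inr l) ⟨l, rfl⟩
    have key := (iIndepFun_iff_measure_inter_preimage_eq_mul.mp hindep)
      (Finset.univ.image Sum.inr) (sets := fun _ => Set.Iic b)
      (fun i _ => measurableSet_Iic)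
    rw [hset, key, Finset.prod_image (fun x _ y _ h => Sum.inr_injective h)]
    have : ∀ l : Fin L, ℙ (f (Sum.inr l) ⁻¹' Set.Iic b)
        = ENNReal.ofReal (1 - Real.exp (-b / lam)) := by
      intro l
      have : f (Sum.inr l) ⁻¹' Set.Iic b = {ω | Z l ω ≤ b} := by
        ext ω; simp [hfdef]
      rw [this, hZcdf l b hb]
    rw [Finset.prod_congr rfl (fun l _ => this l), Finset.prod_const, Finset.card_univ,
      Fintype.card_fin, ← ENNReal.ofReal_pow]
    have h1 : Real.exp (-b / lam) ≤ 1 := by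
      rw [← Real.exp_zero]
      apply Real.exp_le_exp.mpr
      rw [neg_div]
      have : 0 ≤ b / lam := div_nonneg hb hlam.le
      linarith
    linarith
  -- IndepFun X W
  have hXW : IndepFun X W ℙ := by
    set S : Finset (Unit ⊕ Fin L) := {Sum.inl ()} with hSdef
    set T : Finset (Unit ⊕ Fin L) := Finset.univ.image Sum.inr with hTdef
    have h1 := hindep.indepFun_finset S T (by simp [hSdef, hTdef]) hfm
    have hφ : Measurable fun v : S → ℝ =>
        v ⟨Sum.inl (), by simp [hSdef]⟩ := measurable_pi_apply _
    have hψ : Measurable fun v : T → ℝ =>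
        ⨆ l : Fin L, v ⟨Sum.inr l, by simp [hTdef]⟩ :=
      Measurable.iSup (fun l => measurable_pi_apply _)
    have := h1.comp hφ hψ
    exact this
  have hmap : Measure.map (fun ω => (X ω, W ω)) ℙ
      = (Measure.map X ℙ).prod (Measure.map W ℙ) :=
    (indepFun_iff_map_prod_eq_prod_map_map hX.aemeasurable hWm.aemeasurable).mp hXW
  haveI : IsProbabilityMeasure (Measure.map W ℙ) :=
    Measure.isProbabilityMeasure_map hWm.aemeasurable
  -- the event
  have hevent : {ω | (1 + X ω) / (1 + W ω) < ρ}
      = (fun ω => (X ω, W ω)) ⁻¹' {p : ℝ × ℝ | p.1 < ρ - 1 + ρ * p.2} := by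
    ext ω
    simp only [Set.mem_setOf_eq, Set.mem_preimage]
    rw [div_lt_iff₀ (by linarith [hWnn ω])]
    constructor <;> intro h <;> nlinarith [hWnn ω]
  have hS : MeasurableSet {p : ℝ × ℝ | p.1 < ρ - 1 + ρ * p.2} :=
    measurableSet_lt measurable_fst (measurable_const.add (measurable_const.mul measurable_snd))
  -- F
  set F : ℝ → ℝ := fun t => 1 - ξ * gaussQ ((Real.sqrt (t / Γ) - μ) / σ) with hFdef
  have hFc : Continuous F := by
    apply continuous_const.sub
    apply continuous_const.mul
    exact continuous_gaussQ.comp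
      (((Real.continuous_sqrt.comp (continuous_id.div_const Γ)).sub continuous_const).div_const σ)
  have hF0 : F 0 = 0 := by
    simp only [hFdef, zero_div, Real.sqrt_zero, zero_sub, neg_div]
    rw [hξ, show -(μ/σ) = -μ/σ from (neg_div σ μ).symm, inv_mul_cancel₀ (gaussQ_pos _).ne']
    ring
  have hlt : ∀ t : ℝ, 0 ≤ t → Measure.map X ℙ (Set.Iio t) = ENNReal.ofReal (F t) := by
    intro t ht
    rw [Measure.map_apply hX measurableSet_Iio]
    have h1 : X ⁻¹' Set.Iio t = {ω | X ω < t} := rfl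
    rw [h1, ← prob_lt_eq X F hFc hF0 hXcdf t ht, ENNReal.ofReal_toReal (measure_ne_top _ _)]
  -- main computation
  have hae : ∀ᵐ w ∂(Measure.map W ℙ), 0 ≤ w := by
    rw [ae_map_iff hWm.aemeasurable (by exact measurableSet_Ici : MeasurableSet {w : ℝ | 0 ≤ w})]
    exact Filter.Eventually.of_forall hWnn
  have step1 : ℙ {ω | (1 + X ω) / (1 + W ω) < ρ}
      = ∫⁻ w, ENNReal.ofReal (F (ρ - 1 + ρ * w)) ∂(Measure.map W ℙ) := by
    rw [hevent, ← Measure.map_apply (hX.prodMk hWm) hS, hmap,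
      Measure.prod_apply_symm hS]
    apply lintegral_congr_ae
    filter_upwards [hae] with w hw
    have hsec : (fun x => (x, w)) ⁻¹' {p : ℝ × ℝ | p.1 < ρ - 1 + ρ * p.2}
        = Set.Iio (ρ - 1 + ρ * w) := by
      ext x; simp
    rw [hsec, hlt _ (by nlinarith)]
  -- toReal
  have hFnn : ∀ᵐ w ∂(Measure.map W ℙ), 0 ≤ F (ρ - 1 + ρ * w) := by
    filter_upwards [hae] with w hw
    have ht : (0:ℝ) ≤ ρ - 1 + ρ * w := by nlinarith
    have := hXcdf (ρ - 1 + ρ * w) ht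
    rw [hFdef]
    simp only
    rw [← this]
    exact ENNReal.toReal_nonneg
  have step2 : (ℙ {ω | (1 + X ω) / (1 + W ω) < ρ}).toReal
      = ∫ w, F (ρ - 1 + ρ * w) ∂(Measure.map W ℙ) := by
    rw [step1, integral_eq_lintegral_of_nonneg_ae hFnn
      ((hFc.comp (continuous_const.add (continuous_const.mul continuous_id))).aestronglyMeasurable)]
  -- split integral
  set g : ℝ → ℝ := fun x => gaussQ ((Real.sqrt ((ρ - 1 + ρ * x) / Γ) - μ) / σ) with hgdef
  have hgc : Continuous g :=
    continuous_gaussQ.comp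
      ((((Real.continuous_sqrt.comp ((continuous_const.add
        (continuous_const.mul continuous_id)).div_const Γ))).sub continuous_const).div_const σ)
  have hgint : Integrable g (Measure.map W ℙ) := by
    apply Integrable.mono' (integrable_const 1) hgc.aestronglyMeasurable
    filter_upwards with w
    rw [Real.norm_eq_abs, abs_of_nonneg (gaussQ_nonneg _)]
    exact gaussQ_le_one _
  have step3 : ∫ w, F (ρ - 1 + ρ * w) ∂(Measure.map W ℙ)
      = 1 - ξ * ∫ w, g w ∂(Measure.map W ℙ) := by
    have : (fun w => F (ρ - 1 + ρ * w)) = fun w => 1 - ξ * g w := by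
      funext w; rw [hFdef, hgdef]
    rw [this, integral_sub (integrable_const 1) (hgint.const_mul ξ), integral_const,
      integral_const_mul, probReal_univ]
    simp
  -- identify the law of W
  haveI : IsFiniteMeasure (nud L lam) := nud_finite L lam hlam
  have hlaw : Measure.map W ℙ = nud L lam := by
    apply Measure.ext_of_Iic
    intro b
    rcases le_or_gt 0 b with hb | hb
    · rw [hWcdf b hb, nud_Iic L lam hL hlam b, if_pos hb]
    · rw [nud_Iic L lam hL hlam b, if_neg (not_le.mpr hb)]
      rw [Measure.map_apply hWm measurableSet_Iic]
      have : W ⁻¹' Set.Iic b = ∅ := by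
        ext ω
        simp only [Set.mem_preimage, Set.mem_Iic, Set.mem_empty_iff_false, iff_false, not_le]
        exact lt_of_lt_of_le hb (hWnn ω)
      rw [this, measure_empty]
  -- final sum
  have step4 : ∫ w, g w ∂(Measure.map W ℙ)
      = ∑ l ∈ Finset.Icc 1 L, (-1 : ℝ) ^ (l + 1) * (L.choose l : ℝ) *
          ∫ x in Set.Ioi (0:ℝ), g x * (((l : ℝ) / lam) * Real.exp (-(l : ℝ) * x / lam)) := by
    rw [hlaw, nud_integral L lam hL hlam g hgc.measurable]
    have hsplit : ∀ x : ℝ, wdens L lam x * g x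
        = ∑ l ∈ Finset.Icc 1 L, (-1 : ℝ) ^ (l + 1) * (L.choose l : ℝ) *
            (g x * (((l : ℝ) / lam) * Real.exp (-(l : ℝ) * x / lam))) := by
      intro x
      rw [wdens, Finset.sum_mul]
      apply Finset.sum_congr rfl
      intro l _; ring
    rw [MeasureTheory.setIntegral_congr_fun measurableSet_Ioi (fun x _ => hsplit x)]
    rw [MeasureTheory.integral_finset_sum]
    · apply Finset.sum_congr rfl
      intro l _
      rw [integral_const_mul]
    · intro l hl
      apply Integrable.const_mul
      have hl1 : 1 ≤ l := (Finset.mem_Icc.1 hl).1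
      have hpos : 0 < (l : ℝ) / lam := div_pos (by exact_mod_cast hl1) hlam
      have h := exp_neg_integrableOn_Ioi 0 hpos
      have h2 : IntegrableOn (fun x : ℝ => ((l:ℝ)/lam) * Real.exp (-(l:ℝ) * x / lam)) (Set.Ioi 0) := by
        have heq : (fun x : ℝ => ((l:ℝ)/lam) * Real.exp (-(l:ℝ) * x / lam))
            = (fun x : ℝ => ((l:ℝ)/lam) * Real.exp (-((l:ℝ)/lam) * x)) := by
          funext x; congr 2; ring
        rw [heq]; exact h.const_mul _
      apply h2.bdd_mul (c := 1) hgc.aestronglyMeasurable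
      refine ae_of_all _ (fun x => ?_)
      rw [Real.norm_eq_abs, abs_of_nonneg (gaussQ_nonneg _)]
      exact gaussQ_le_one _
  rw [show {ω | (1 + X ω) / (1 + ⨆ l, Z l ω) < ρ} = {ω | (1 + X ω) / (1 + W ω) < ρ} from rfl]
  rw [step2, step3, step4, hgdef]
end
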